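/- Let T be an A-bounded operator and q ∈ D, and suppose the range of A has dimension at least 2. Then w_{q,A}(T) = sup{ |q|·|⟨Tx,x⟩_A| + √(1−|q|²)·|⟨Tx,z⟩_A| : x,z ∈ H, ‖x‖_A = ‖z‖_A = 1, ⟨x,z⟩_A = 0 }. -/

import Mathlib

set_option linter.unusedSectionVars false
set_option linter.unusedVariables false


noncomputable section

open Filter

variable {H : Type*} [NormedAddCommGroup H] [InnerProductSpace ℂ H] [CompleteSpace H]

/-- The paper's semi-inner product `⟨x, y⟩_A = ⟨A x, y⟩`, where the inner product of the
paper is linear in the *first* argument; in Mathlib's convention this is `⟪y, A x⟫_ℂ`. -/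
def sipA (A : H →L[ℂ] H) (x y : H) : ℂ := inner ℂ y (A x)

/-- The `A`-seminorm `‖x‖_A = ⟨A x, x⟩ ^ (1/2)`. -/
def semiNormA (A : H →L[ℂ] H) (x : H) : ℝ := Real.sqrt (sipA A x x).re

/-- The `A`-`q`-numerical range `W_{q,A}(T)`. -/
def WqA (A : H →L[ℂ] H) (q : ℂ) (T : H →L[ℂ] H) : Set ℂ :=
  {z | ∃ x y : H, semiNormA A x = 1 ∧ semiNormA A y = 1 ∧ sipA A x y = q ∧ z = sipA A (T x) y}

/-- The `A`-`q`-numerical radius `w_{q,A}(T)`. -/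
def wqA (A : H →L[ℂ] H) (q : ℂ) (T : H →L[ℂ] H) : ℝ := sSup ((fun z : ℂ => ‖z‖) '' WqA A q T)

/-- The `A`-operator seminorm `‖T‖_A = sup {‖T x‖_A : ‖x‖_A ≤ 1}`. -/
def opNormA (A T : H →L[ℂ] H) : ℝ :=
  sSup ((fun x => semiNormA A (T x)) '' {x : H | semiNormA A x ≤ 1})

/-- `T` is `A`-bounded: `‖T x‖_A ≤ c ‖x‖_A` for some `c > 0`. -/
def ABounded (A T : H →L[ℂ] H) : Prop := ∃ c > 0, ∀ x : H, semiNormA A (T x) ≤ c * semiNormA A x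

variable {A : H →L[ℂ] H}

lemma sipA_add_left (x x' y : H) : sipA A (x + x') y = sipA A x y + sipA A x' y := by
  simp [sipA, inner_add_right]

lemma sipA_smul_left (c : ℂ) (x y : H) : sipA A (c • x) y = c * sipA A x y := by
  simp [sipA, inner_smul_right]

lemma sipA_add_right (x y y' : H) : sipA A x (y + y') = sipA A x y + sipA A x y' := by
  simp [sipA, inner_add_left]

lemma sipA_smul_right (c : ℂ) (x y : H) :
    sipA A x (c • y) = (starRingEnd ℂ c) * sipA A x y := by
  simp [sipA, inner_smul_left, mul_comm]

lemma sipA_sub_left (x x' y : H) : sipA A (x - x') y = sipA A x y - sipA A x' y := by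
  simp [sipA, inner_sub_right]

lemma sipA_sub_right (x y y' : H) : sipA A x (y - y') = sipA A x y - sipA A x y' := by
  simp [sipA, inner_sub_left]

lemma sipA_conj (hA : A.IsPositive) (x y : H) :
    sipA A y x = starRingEnd ℂ (sipA A x y) := by
  have hsymm := hA.1
  have h1 : (inner ℂ (A x) y : ℂ) = inner ℂ x (A y) := hsymm x y
  rw [sipA, sipA, ← h1, ← inner_conj_symm]

lemma sipA_self_re_nonneg (hA : A.IsPositive) (x : H) : 0 ≤ (sipA A x x).re := by
  have h := hA.2 x
  simpa [ContinuousLinearMap.reApplyInnerSelf, RCLike.re_to_complex, sipA, inner_re_symm] using h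

lemma semiNormA_nonneg (x : H) : 0 ≤ semiNormA A x := Real.sqrt_nonneg _

lemma semiNormA_sq (hA : A.IsPositive) (x : H) :
    semiNormA A x ^ 2 = (sipA A x x).re := by
  rw [semiNormA, Real.sq_sqrt (sipA_self_re_nonneg hA x)]

lemma sipA_self_coe (hA : A.IsPositive) (x : H) :
    sipA A x x = ((semiNormA A x ^ 2 : ℝ) : ℂ) := by
  have him : (sipA A x x).im = 0 := by
    have h := sipA_conj hA x x
    have := congrArg Complex.im h
    simp at this
    linarith
  rw [semiNormA_sq hA x]
  exact Complex.ext (by simp) (by simp [him])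

lemma sipA_abs_le (hA : A.IsPositive) (x y : H) :
    ‖sipA A x y‖ ≤ semiNormA A x * semiNormA A y := by
  by_cases h : sipA A x y = 0
  · simp [h]
    exact mul_nonneg (semiNormA_nonneg x) (semiNormA_nonneg y)
  set s := sipA A x y with hs
  have habs : (0:ℝ) < ‖s‖ := by
    simpa [norm_pos_iff] using h
  have habs0 : ((‖s‖ : ℝ) : ℂ) ≠ 0 := by exact_mod_cast habs.ne'
  have hkey : s * starRingEnd ℂ s = ((‖s‖ : ℝ) : ℂ)^2 := by
    rw [Complex.mul_conj, Complex.normSq_eq_norm_sq]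
    push_cast
    ring
  have key : ∀ t : ℝ, 0 ≤ (sipA A y y).re * (t * t) + 2 * ‖s‖ * t + (sipA A x x).re := by
    intro t
    set μ : ℂ := s / ‖s‖ with hμ
    set c : ℂ := (t : ℂ) * μ with hc
    have hexp : sipA A (x + c • y) (x + c • y)
        = sipA A x x + c * sipA A y x + starRingEnd ℂ c * s + c * starRingEnd ℂ c * sipA A y y := by
      rw [sipA_add_left, sipA_add_right, sipA_add_right, sipA_smul_left, sipA_smul_right,
        sipA_smul_right, sipA_smul_left, ← hs]
      ring
    have hμconj : c * sipA A y x = ((t * ‖s‖ : ℝ) : ℂ) := by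
      rw [sipA_conj hA x y, ← hs, hc, hμ]
      push_cast
      field_simp
      linear_combination (t : ℂ) * hkey
    have hμconj2 : starRingEnd ℂ c * s = ((t * ‖s‖ : ℝ) : ℂ) := by
      rw [hc, hμ]
      push_cast [map_mul, map_div₀, Complex.conj_ofReal]
      field_simp
      linear_combination (t : ℂ) * hkey
    have hcc : c * starRingEnd ℂ c = ((t * t : ℝ) : ℂ) := by
      rw [hc, hμ]
      push_cast [map_mul, map_div₀, Complex.conj_ofReal]
      field_simp
      linear_combination (t:ℂ) * (t:ℂ) * hkey
    have h0 := sipA_self_re_nonneg hA (x + c • y)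
    rw [hexp, hμconj, hμconj2, hcc] at h0
    simp only [Complex.add_re, Complex.mul_re, Complex.ofReal_re, Complex.ofReal_im] at h0
    nlinarith [h0]
  have hd := discrim_le_zero key
  rw [discrim] at hd
  have hsq : ‖s‖ ^ 2 ≤ (sipA A x x).re * (sipA A y y).re := by nlinarith
  have := Real.sqrt_le_sqrt hsq
  rw [Real.sqrt_sq (norm_nonneg s), Real.sqrt_mul (sipA_self_re_nonneg hA x)] at this
  simpa [semiNormA] using this

lemma apply_eq_zero_of_semiNormA (hA : A.IsPositive) {u : H}
    (h : semiNormA A u = 0) : A u = 0 := by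
  have h2 : sipA A u (A u) = 0 := by
    have := sipA_abs_le hA u (A u)
    rw [h, zero_mul] at this
    simpa using le_antisymm this (norm_nonneg _)
  have : (inner ℂ (A u) (A u) : ℂ) = 0 := h2
  exact inner_self_eq_zero.mp this

lemma semiNormA_real_smul (hA : A.IsPositive) (r : ℝ) (v : H) :
    semiNormA A ((r : ℂ) • v) = |r| * semiNormA A v := by
  have : sipA A ((r:ℂ) • v) ((r:ℂ) • v) = ((r^2 : ℝ):ℂ) * sipA A v v := by
    rw [sipA_smul_left, sipA_smul_right]
    push_cast
    simp [Complex.conj_ofReal]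
    ring
  rw [semiNormA, this]
  simp only [Complex.mul_re, Complex.ofReal_re, Complex.ofReal_im]
  rw [show r^2 * (sipA A v v).re - 0 * (sipA A v v).im = r^2 * (sipA A v v).re by ring,
    Real.sqrt_mul (sq_nonneg r), Real.sqrt_sq_eq_abs]
  rfl

lemma exists_semiNormA_one (hA : A.IsPositive)
    (hrank : 2 ≤ Module.rank ℂ (LinearMap.range A.toLinearMap)) :
    ∃ x : H, semiNormA A x = 1 := by
  by_contra hcon
  push_neg at hcon
  have hz : ∀ u : H, semiNormA A u = 0 := by
    intro u
    by_contra hu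
    have hpos : 0 < semiNormA A u := lt_of_le_of_ne (semiNormA_nonneg u) (Ne.symm hu)
    refine hcon ((((semiNormA A u)⁻¹ : ℝ) : ℂ) • u) ?_
    rw [semiNormA_real_smul hA, abs_of_pos (inv_pos.mpr hpos)]
    field_simp
  have hA0 : ∀ u : H, A u = 0 := fun u => apply_eq_zero_of_semiNormA hA (hz u)
  have : LinearMap.range A.toLinearMap = ⊥ := by
    rw [LinearMap.range_eq_bot]
    ext u; simp [hA0 u]
  rw [this] at hrank
  have h0 : Module.rank ℂ (⊥ : Submodule ℂ H) = 0 := rank_bot ℂ H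
  rw [h0] at hrank
  exact absurd hrank (by norm_num)

lemma exists_orth (hA : A.IsPositive)
    (hrank : 2 ≤ Module.rank ℂ (LinearMap.range A.toLinearMap))
    {x : H} (hx : semiNormA A x = 1) :
    ∃ z : H, semiNormA A z = 1 ∧ sipA A x z = 0 := by
  have hxx : sipA A x x = 1 := by rw [sipA_self_coe hA, hx]; norm_num
  -- the orthogonal projection residue
  set w : H → H := fun v => v - (starRingEnd ℂ (sipA A x v)) • x with hw
  have hworth : ∀ v, sipA A x (w v) = 0 := by
    intro v
    rw [hw]
    simp only
    rw [sipA_sub_right, sipA_smul_right, hxx]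
    simp
  have hex : ∃ v, semiNormA A (w v) ≠ 0 := by
    by_contra hcon
    push_neg at hcon
    have hAw : ∀ v, A (w v) = 0 := fun v => apply_eq_zero_of_semiNormA hA (hcon v)
    have hsub : LinearMap.range A.toLinearMap ≤ Submodule.span ℂ {A x} := by
      rintro u ⟨v, rfl⟩
      have h0 := hAw v
      rw [hw] at h0
      simp only [map_sub, map_smul, sub_eq_zero] at h0
      have : A.toLinearMap v = (starRingEnd ℂ (sipA A x v)) • A x := h0
      rw [this]
      exact Submodule.smul_mem _ _ (Submodule.mem_span_singleton_self _)
    have h1 : Module.rank ℂ (LinearMap.range A.toLinearMap) ≤ 1 := by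
      calc Module.rank ℂ (LinearMap.range A.toLinearMap)
          ≤ Module.rank ℂ (Submodule.span ℂ {A x}) := Submodule.rank_mono hsub
        _ ≤ 1 := by simpa using rank_span_le (R := ℂ) ({A x} : Set H)
    have := le_trans hrank h1
    norm_num at this
  obtain ⟨v, hv⟩ := hex
  have hpos : 0 < semiNormA A (w v) := lt_of_le_of_ne (semiNormA_nonneg _) (Ne.symm hv)
  refine ⟨(((semiNormA A (w v))⁻¹ : ℝ) : ℂ) • w v, ?_, ?_⟩
  · rw [semiNormA_real_smul hA]
    rw [abs_of_pos (inv_pos.mpr hpos)]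
    field_simp
  · rw [sipA_smul_right, hworth]
    simp

lemma sipA_self_one (hA : A.IsPositive) {x : H} (hx : semiNormA A x = 1) :
    sipA A x x = 1 := by
  rw [sipA_self_coe hA, hx]; norm_num

theorem main_thm (A : H →L[ℂ] H) (hA : A.IsPositive)
    (hrank : 2 ≤ Module.rank ℂ (LinearMap.range A.toLinearMap))
    (T : H →L[ℂ] H) (hT : ∃ c > 0, ∀ x : H, semiNormA A (T x) ≤ c * semiNormA A x)
    (q : ℂ) (hq : ‖q‖ ≤ 1) :
    sSup ((fun z : ℂ => ‖z‖) '' WqA A q T) = sSup {r : ℝ | ∃ x z : H, semiNormA A x = 1 ∧ semiNormA A z = 1 ∧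
      sipA A x z = 0 ∧
      r = ‖q‖ * ‖sipA A (T x) x‖ +
        Real.sqrt (1 - ‖q‖ ^ 2) * ‖sipA A (T x) z‖} := by
  classical
  obtain ⟨c, hc0, hc⟩ := hT
  set S := {r : ℝ | ∃ x z : H, semiNormA A x = 1 ∧ semiNormA A z = 1 ∧
      sipA A x z = 0 ∧
      r = ‖q‖ * ‖sipA A (T x) x‖ +
        Real.sqrt (1 - ‖q‖ ^ 2) * ‖sipA A (T x) z‖} with hSdef
  set M := (fun z : ℂ => ‖z‖) '' WqA A q T with hMdef
  have hq2 : (0:ℝ) ≤ 1 - ‖q‖ ^ 2 := by nlinarith [norm_nonneg q]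
  set t : ℝ := Real.sqrt (1 - ‖q‖ ^ 2) with hts
  have ht0 : 0 ≤ t := Real.sqrt_nonneg _
  have ht2 : t ^ 2 = 1 - ‖q‖ ^ 2 := Real.sq_sqrt hq2
  -- bound on M
  have hMb : ∀ m ∈ M, m ≤ c := by
    rintro m ⟨w, ⟨x, y, hx, hy, hxy, rfl⟩, rfl⟩
    calc ‖sipA A (T x) y‖ ≤ semiNormA A (T x) * semiNormA A y := sipA_abs_le hA _ _
      _ = semiNormA A (T x) := by rw [hy, mul_one]
      _ ≤ c * semiNormA A x := hc x
      _ = c := by rw [hx, mul_one]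
  have hMbdd : BddAbove M := ⟨c, fun m hm => hMb m hm⟩
  -- S ⊆ M
  have hSM : S ⊆ M := by
    rintro r ⟨x, z, hx, hz, hxz, rfl⟩
    have hxx : sipA A x x = 1 := sipA_self_one hA hx
    have hzz : sipA A z z = 1 := sipA_self_one hA hz
    have hzx : sipA A z x = 0 := by rw [sipA_conj hA x z, hxz, map_zero]
    set α : ℂ := q * sipA A (T x) x with hα
    set β : ℂ := sipA A (T x) z with hβ
    set φ : ℂ := if α = 0 then 1 else α / ‖α‖ with hφ
    have hφα : φ * ‖α‖ = α := by
      by_cases h : α = 0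
      · simp [hφ, h]
      · have : ((‖α‖ : ℝ) : ℂ) ≠ 0 := by
          simpa using ((norm_ne_zero_iff.mpr h))
        simp only [hφ, h, if_false]
        field_simp
    have hφabs : ‖φ‖ = 1 := by
      by_cases h : α = 0
      · simp [hφ, h]
      · simp only [hφ, h, if_false, norm_div, Complex.norm_real, Real.norm_eq_abs,
          abs_of_nonneg (norm_nonneg α)]
        exact div_self ((norm_ne_zero_iff.mpr h))
    set e : ℂ := if β = 0 then (t : ℂ) else (t : ℂ) * φ * starRingEnd ℂ β / ‖β‖ with he
    have heβ : e * β = ((t * ‖β‖ : ℝ) : ℂ) * φ := by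
      by_cases h : β = 0
      · simp [he, h]
      · have hβ0 : ((‖β‖ : ℝ) : ℂ) ≠ 0 := by simpa using ((norm_ne_zero_iff.mpr h))
        simp only [he, h, if_false]
        have hmc : β * starRingEnd ℂ β = ((‖β‖ : ℝ) : ℂ)^2 := by
          rw [Complex.mul_conj, Complex.normSq_eq_norm_sq]; push_cast; ring
        field_simp
        push_cast
        linear_combination ((t:ℂ)) * φ * hmc
    have heabs : ‖e‖ = t := by
      by_cases h : β = 0
      · simp [he, h, abs_of_nonneg ht0]
      · have h1 := congrArg norm heβ
        rw [norm_mul, norm_mul, hφabs, mul_one, Complex.norm_real, Real.norm_eq_abs,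
          abs_of_nonneg (by positivity : (0:ℝ) ≤ t * ‖β‖)] at h1
        exact mul_right_cancel₀ ((norm_ne_zero_iff.mpr h)) h1
    set y : H := (starRingEnd ℂ q) • x + (starRingEnd ℂ e) • z with hy
    have h1 : sipA A x y = q := by
      rw [hy, sipA_add_right, sipA_smul_right, sipA_smul_right, hxx, hxz]
      simp
    have h2 : sipA A y y = 1 := by
      rw [hy, sipA_add_left, sipA_add_right, sipA_add_right, sipA_smul_left, sipA_smul_left,
        sipA_smul_right, sipA_smul_right, sipA_smul_right, sipA_smul_right,
        sipA_smul_left, sipA_smul_left, hxx, hzz, hxz, hzx]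
      simp only [Complex.conj_conj, mul_zero, mul_one, add_zero, zero_add]
      have hq' : starRingEnd ℂ q * q = ((‖q‖ : ℝ) : ℂ)^2 := by
        rw [mul_comm, Complex.mul_conj, Complex.normSq_eq_norm_sq]; push_cast; ring
      have he' : starRingEnd ℂ e * e = ((t : ℝ) : ℂ)^2 := by
        rw [mul_comm, Complex.mul_conj, Complex.normSq_eq_norm_sq, heabs]; push_cast; ring
      have htc : ((t : ℝ) : ℂ)^2 = 1 - ((‖q‖ : ℝ) : ℂ)^2 := by
        exact_mod_cast congrArg Complex.ofReal ht2
      linear_combination hq' + he' + htc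
    have hsy : semiNormA A y = 1 := by
      rw [semiNormA, h2]; simp
    refine ⟨sipA A (T x) y, ⟨x, y, hx, hsy, h1, rfl⟩, ?_⟩
    have h3 : sipA A (T x) y = α + e * β := by
      rw [hy, sipA_add_right, sipA_smul_right, sipA_smul_right, Complex.conj_conj,
        Complex.conj_conj, hα, hβ]
    have habs2 : ‖α + e * β‖ = ‖α‖ + t * ‖β‖ := by
      have hform : α + e * β
          = φ * (((‖α‖ : ℝ) : ℂ) + ((t * ‖β‖ : ℝ) : ℂ)) := by
        linear_combination heβ - hφα
      rw [hform, norm_mul, hφabs, one_mul, ← Complex.ofReal_add, Complex.norm_real, Real.norm_eq_abs]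
      exact abs_of_nonneg (by positivity)
    beta_reduce
    rw [h3, habs2, hα, norm_mul]
  -- nonemptiness
  have hSne : S.Nonempty := by
    obtain ⟨x0, hx0⟩ := exists_semiNormA_one hA hrank
    obtain ⟨z0, hz0, hxz0⟩ := exists_orth hA hrank hx0
    exact ⟨_, x0, z0, hx0, hz0, hxz0, rfl⟩
  have hMne : M.Nonempty := hSne.mono hSM
  have hSbdd : BddAbove S := ⟨c, fun r hr => hMb r (hSM hr)⟩
  -- every element of M is at most sSup S
  have hMS : ∀ m ∈ M, m ≤ sSup S := by
    rintro m ⟨w, ⟨x, y, hx, hy, hxy, rfl⟩, rfl⟩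
    have hxx : sipA A x x = 1 := sipA_self_one hA hx
    have hyy : sipA A y y = 1 := sipA_self_one hA hy
    have hyx : sipA A y x = starRingEnd ℂ q := by rw [sipA_conj hA x y, hxy]
    set y' : H := y - (starRingEnd ℂ q) • x with hy'
    have hxy' : sipA A x y' = 0 := by
      rw [hy', sipA_sub_right, sipA_smul_right, hxy, hxx, Complex.conj_conj, mul_one, sub_self]
    have hy'y' : sipA A y' y' = ((1 - ‖q‖ ^ 2 : ℝ) : ℂ) := by
      rw [hy', sipA_sub_left, sipA_sub_right, sipA_sub_right, sipA_smul_left,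
        sipA_smul_right, sipA_smul_right, sipA_smul_left, hxx, hyy, hxy, hyx]
      have hq' : starRingEnd ℂ q * q = ((‖q‖ : ℝ) : ℂ)^2 := by
        rw [mul_comm, Complex.mul_conj, Complex.normSq_eq_norm_sq]; push_cast; ring
      push_cast
      linear_combination -hq'
    have hny' : semiNormA A y' = t := by
      rw [semiNormA, hy'y', hts, Complex.ofReal_re]
    have hydecomp : y = (starRingEnd ℂ q) • x + y' := by rw [hy']; abel
    by_cases h0 : t = 0
    · -- degenerate case : the orthogonal part has zero seminorm
      have hTy' : sipA A (T x) y' = 0 := by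
        have hle := sipA_abs_le hA (T x) y'
        rw [hny', h0, mul_zero] at hle
        simpa using le_antisymm hle (norm_nonneg _)
      have hTy : sipA A (T x) y = q * sipA A (T x) x := by
        rw [hydecomp, sipA_add_right, sipA_smul_right, hTy', Complex.conj_conj, add_zero]
      obtain ⟨z, hz, hxz⟩ := exists_orth hA hrank hx
      have hrS : (‖q‖ * ‖sipA A (T x) x‖
          + t * ‖sipA A (T x) z‖) ∈ S := ⟨x, z, hx, hz, hxz, rfl⟩
      have hle2 : ‖sipA A (T x) y‖
          ≤ ‖q‖ * ‖sipA A (T x) x‖ + t * ‖sipA A (T x) z‖ := by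
        rw [hTy, norm_mul, h0, zero_mul, add_zero]
      exact le_trans hle2 (le_csSup hSbdd hrS)
    · -- nondegenerate case
      have htpos : 0 < t := lt_of_le_of_ne ht0 (Ne.symm h0)
      set z : H := ((t⁻¹ : ℝ) : ℂ) • y' with hzdef
      have hz : semiNormA A z = 1 := by
        rw [hzdef, semiNormA_real_smul hA, hny', abs_of_pos (inv_pos.mpr htpos)]
        field_simp
      have hxz : sipA A x z = 0 := by
        rw [hzdef, sipA_smul_right, hxy', mul_zero]
      have hy'z : y' = ((t : ℝ) : ℂ) • z := by
        rw [hzdef, smul_smul]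
        norm_cast
        rw [mul_inv_cancel₀ h0, one_smul]
      have hTy : sipA A (T x) y = q * sipA A (T x) x + (t : ℂ) * sipA A (T x) z := by
        rw [hydecomp, sipA_add_right, sipA_smul_right, Complex.conj_conj, hy'z,
          sipA_smul_right, Complex.conj_ofReal]
      have hrS : (‖q‖ * ‖sipA A (T x) x‖
          + t * ‖sipA A (T x) z‖) ∈ S := ⟨x, z, hx, hz, hxz, rfl⟩
      have hle2 : ‖sipA A (T x) y‖
          ≤ ‖q‖ * ‖sipA A (T x) x‖ + t * ‖sipA A (T x) z‖ := by
        rw [hTy]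
        refine le_trans (norm_add_le _ _) ?_
        rw [norm_mul, norm_mul, Complex.norm_real, Real.norm_eq_abs, abs_of_pos htpos]
      exact le_trans hle2 (le_csSup hSbdd hrS)
  exact le_antisymm (csSup_le hMne hMS) (csSup_le_csSup hMbdd hSne hSM)


theorem stmt_8 (A : H →L[ℂ] H) (hA : A.IsPositive)
    (hrank : 2 ≤ Module.rank ℂ (LinearMap.range A.toLinearMap))
    (T : H →L[ℂ] H) (hT : ABounded A T)
    (q : ℂ) (hq : ‖q‖ ≤ 1) :
    wqA A q T = sSup {r : ℝ | ∃ x z : H, semiNormA A x = 1 ∧ semiNormA A z = 1 ∧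
      sipA A x z = 0 ∧
      r = ‖q‖ * ‖sipA A (T x) x‖ +
        Real.sqrt (1 - ‖q‖ ^ 2) * ‖sipA A (T x) z‖} := by
  exact main_thm A hA hrank T hT q hq
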